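/- arXiv:2502.13424 — 2 statements merged into one kernel-verified Lean document; each statement's English description precedes it below -/
import Mathlib

section
/- The bitwise OR (superposition) of two distinct extended-IDs is never itself an extended-ID: if u ≠ v are IDs in [0, 2^k), then the coordinatewise OR of the extended-ID of u and the extended-ID of v has strictly more than k ones, and hence equals no extended-ID. -/
/-- The extended-ID of an ID `v` with parameter `k` (`n = 2^k`). -/
def extId (k v : ℕ) : Fin (2 * k) → Bool :=
  fun i => if (i : ℕ) < k then v.testBit i else !(v.testBit ((i : ℕ) - k))

lemma card_eq_pair_sum (k : ℕ) (p : Fin (2 * k) → Bool) (q : ℕ → Bool)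
    (hq : ∀ i : Fin (2 * k), p i = q i) :
    (Finset.univ.filter fun i : Fin (2 * k) => p i = true).card =
      ∑ i ∈ Finset.range k, ((if q i then 1 else 0) + (if q (k + i) then 1 else 0)) := by
  rw [Finset.card_filter]
  have : ∀ i : Fin (2 * k), (if p i = true then 1 else 0) =
      (fun j : ℕ => if q j = true then 1 else 0) (i : ℕ) := by
    intro i; simp [hq i]
  rw [Finset.sum_congr rfl fun i _ => this i]
  rw [Fin.sum_univ_eq_sum_range (fun j => if q j = true then (1:ℕ) else 0) (2 * k)]
  rw [two_mul, Finset.sum_range_add, ← Finset.sum_add_distrib]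

/-- The coordinatewise OR of two distinct extended-IDs has strictly more than `k`
ones, hence is not an extended-ID. -/
theorem or_of_two_extIds_not_extId (k : ℕ) (u v : ℕ) (hu : u < 2 ^ k) (hv : v < 2 ^ k)
    (huv : u ≠ v) :
    k < (Finset.univ.filter fun i : Fin (2 * k) => (extId k u i || extId k v i) = true).card ∧
    ∀ w, w < 2 ^ k → (fun i => extId k u i || extId k v i) ≠ extId k w := by
  -- a differing bit below k
  obtain ⟨j, hjk, hj⟩ : ∃ j, j < k ∧ u.testBit j ≠ v.testBit j := by
    by_contra h
    push_neg at h
    exact huv (Nat.eq_of_testBit_eq fun i => by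
      by_cases hik : i < k
      · exact h i hik
      · rw [Nat.testBit_eq_false_of_lt (lt_of_lt_of_le hu (Nat.pow_le_pow_right two_pos (le_of_not_gt hik))),
          Nat.testBit_eq_false_of_lt (lt_of_lt_of_le hv (Nat.pow_le_pow_right two_pos (le_of_not_gt hik)))])
  -- counting for the OR
  set qor : ℕ → Bool := fun i =>
    (if i < k then u.testBit i else !(u.testBit (i - k))) ||
    (if i < k then v.testBit i else !(v.testBit (i - k))) with hqor
  have hcard : (Finset.univ.filter fun i : Fin (2 * k) =>
      (extId k u i || extId k v i) = true).card =
      ∑ i ∈ Finset.range k, ((if qor i then 1 else 0) + (if qor (k + i) then 1 else 0)) := by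
    apply card_eq_pair_sum
    intro i; simp [extId, hqor]
  have hgt : k < (Finset.univ.filter fun i : Fin (2 * k) =>
      (extId k u i || extId k v i) = true).card := by
    rw [hcard]
    calc k = ∑ _i ∈ Finset.range k, 1 := by simp
    _ < _ := by
        apply Finset.sum_lt_sum
        · intro i hi
          rw [Finset.mem_range] at hi
          have h1 : qor i = (u.testBit i || v.testBit i) := by simp [hqor, hi]
          have h2 : qor (k + i) = (!(u.testBit i) || !(v.testBit i)) := by
            simp [hqor, Nat.add_sub_cancel_left]
          rw [h1, h2]
          cases u.testBit i <;> cases v.testBit i <;> simp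
        · refine ⟨j, Finset.mem_range.mpr hjk, ?_⟩
          have h1 : qor j = (u.testBit j || v.testBit j) := by simp [hqor, hjk]
          have h2 : qor (k + j) = (!(u.testBit j) || !(v.testBit j)) := by
            simp [hqor, Nat.add_sub_cancel_left]
          rw [h1, h2]
          cases hub : u.testBit j <;> cases hvb : v.testBit j <;> simp_all
  refine ⟨hgt, ?_⟩
  intro w hw heq
  -- extId k w has exactly k ones
  set qw : ℕ → Bool := fun i => if i < k then w.testBit i else !(w.testBit (i - k)) with hqw
  have hcardw : (Finset.univ.filter fun i : Fin (2 * k) => extId k w i = true).card =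
      ∑ i ∈ Finset.range k, ((if qw i then 1 else 0) + (if qw (k + i) then 1 else 0)) := by
    apply card_eq_pair_sum
    intro i; simp [extId, hqw]
  have hk : (Finset.univ.filter fun i : Fin (2 * k) => extId k w i = true).card = k := by
    rw [hcardw]
    rw [Finset.sum_congr rfl (fun i hi => ?_), Finset.sum_const, smul_eq_mul, mul_one]
    · simp
    · rw [Finset.mem_range] at hi
      have h1 : qw i = w.testBit i := by simp [hqw, hi]
      have h2 : qw (k + i) = !(w.testBit i) := by simp [hqw, Nat.add_sub_cancel_left]
      rw [h1, h2]
      cases w.testBit i <;> simp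
  have : (Finset.univ.filter fun i : Fin (2 * k) => (extId k u i || extId k v i) = true) =
      (Finset.univ.filter fun i : Fin (2 * k) => extId k w i = true) := by
    apply Finset.filter_congr
    intro i _
    exact iff_of_eq (congrArg (· = true) (congrFun heq i))
  rw [this, hk] at hgt
  exact lt_irrefl _ hgt
end

section
/- A random construction yields strong selectors of size O(k^2 log n): for all sufficiently large n and 2 ≤ k ≤ n, there exists a family F of subsets of [n] with |F| ≤ C·k^2·log n (for some absolute constant C) such that for every S ⊆ [n] with |S| ≤ k and every a ∈ S, some F ∈ F satisfies F ∩ S = {a}. -/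
namespace StrongSelectorAux

open Finset

/-- The selector set associated to a coloring `h : Fin n → Fin k`:
elements colored `0`. -/
def selSet (n k : ℕ) (h : Fin n → Fin k) : Finset ℕ :=
  (Finset.univ.filter fun x : Fin n => ((h x : ℕ) = 0)).image Fin.val

lemma selSet_subset (n k : ℕ) (h : Fin n → Fin k) : selSet n k h ⊆ Finset.range n := by
  intro y hy
  simp only [selSet, mem_image, mem_filter, mem_univ, true_and] at hy
  obtain ⟨x, _, rfl⟩ := hy
  simpa using x.isLt

lemma mem_selSet {n k : ℕ} {h : Fin n → Fin k} {y : ℕ} (hy : y < n) :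
    y ∈ selSet n k h ↔ ((h ⟨y, hy⟩ : ℕ) = 0) := by
  simp only [selSet, mem_image, mem_filter, mem_univ, true_and]
  constructor
  · rintro ⟨x, hx0, rfl⟩
    convert hx0 using 2
  · intro h0
    exact ⟨⟨y, hy⟩, h0, rfl⟩

/-- colorings which "select `a` from `S`" -/
def good1 (n k : ℕ) (S : Finset ℕ) (a : ℕ) : Finset (Fin n → Fin k) :=
  Finset.univ.filter fun h => selSet n k h ∩ S = {a}

def bad1 (n k : ℕ) (S : Finset ℕ) (a : ℕ) : Finset (Fin n → Fin k) :=
  Finset.univ.filter fun h => selSet n k h ∩ S ≠ {a}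

lemma good_iff {n k : ℕ} {h : Fin n → Fin k} {S : Finset ℕ} (hS : S ⊆ Finset.range n)
    {a : ℕ} (ha : a ∈ S) :
    selSet n k h ∩ S = {a} ↔
      ∀ x : Fin n, ((x : ℕ) = a → (h x : ℕ) = 0) ∧
        ((x : ℕ) ∈ S → (x : ℕ) ≠ a → (h x : ℕ) ≠ 0) := by
  constructor
  · intro heq
    intro x
    constructor
    · rintro rfl
      have : (x : ℕ) ∈ selSet n k h ∩ S := by rw [heq]; exact mem_singleton_self _
      rw [mem_inter, mem_selSet x.isLt] at this
      simpa using this.1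
    · intro hxS hxa hx0
      have : (x : ℕ) ∈ selSet n k h ∩ S := by
        rw [mem_inter, mem_selSet x.isLt]
        exact ⟨by simpa using hx0, hxS⟩
      rw [heq, mem_singleton] at this
      exact hxa this
  · intro hcond
    ext y
    rw [mem_inter, mem_singleton]
    constructor
    · rintro ⟨hy1, hy2⟩
      have hyn : y < n := by simpa using hS hy2
      by_contra hya
      exact (hcond ⟨y, hyn⟩).2 hy2 hya ((mem_selSet hyn).1 hy1)
    · intro hy
      subst hy
      have hyn : y < n := by simpa using hS ha
      exact ⟨(mem_selSet hyn).2 ((hcond ⟨y, hyn⟩).1 rfl), ha⟩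

lemma card_good1 {n k : ℕ} (hk : 2 ≤ k) {S : Finset ℕ} (hS : S ⊆ Finset.range n)
    {a : ℕ} (ha : a ∈ S) (hsk : S.card ≤ k) (hkn : k ≤ n) :
    (k - 1) ^ (k - 1) * k ^ (n - k) ≤ (good1 n k S a).card := by
  classical
  set s := S.card with hs
  have hs1 : 1 ≤ s := Finset.card_pos.2 ⟨a, ha⟩
  have han : a < n := by simpa using hS ha
  -- describe good1 as a piFinset
  set A : Fin n → Finset (Fin k) := fun x =>
    if (x : ℕ) = a then Finset.univ.filter (fun c : Fin k => (c : ℕ) = 0)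
    else if (x : ℕ) ∈ S then Finset.univ.filter (fun c : Fin k => (c : ℕ) ≠ 0)
    else Finset.univ with hA
  have hgood : good1 n k S a = Fintype.piFinset A := by
    ext h
    rw [good1, mem_filter, Fintype.mem_piFinset]
    simp only [mem_univ, true_and]
    rw [good_iff hS ha]
    apply forall_congr'
    intro x
    rw [hA]
    by_cases hx1 : (x : ℕ) = a
    · simp [hx1]
    · by_cases hx2 : (x : ℕ) ∈ S <;> simp [hx1, hx2]
  -- cardinalities of the fibers
  have hc0 : (Finset.univ.filter (fun c : Fin k => (c : ℕ) = 0)).card = 1 := by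
    have : (Finset.univ.filter (fun c : Fin k => (c : ℕ) = 0)) = {(⟨0, by omega⟩ : Fin k)} := by
      ext c; simp [Fin.ext_iff]
    rw [this, card_singleton]
  have hc1 : (Finset.univ.filter (fun c : Fin k => (c : ℕ) ≠ 0)).card = k - 1 := by
    have he : (Finset.univ.filter (fun c : Fin k => (c : ℕ) ≠ 0))
        = Finset.univ \ {(⟨0, by omega⟩ : Fin k)} := by
      ext c; simp [Fin.ext_iff]
    rw [he, Finset.card_sdiff_of_subset (by simp), card_univ, Fintype.card_fin, card_singleton]
  have hcard : (good1 n k S a).card = ∏ x : Fin n, (A x).card := by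
    rw [hgood, Fintype.card_piFinset]
  -- compute the product
  have hTcard : (Finset.univ.filter (fun x : Fin n => (x : ℕ) ∈ S)).card = s := by
    have himg : (Finset.univ.filter (fun x : Fin n => (x : ℕ) ∈ S)).image Fin.val = S := by
      ext y
      simp only [mem_image, mem_filter, mem_univ, true_and]
      constructor
      · rintro ⟨x, hx, rfl⟩; exact hx
      · intro hy
        exact ⟨⟨y, by simpa using hS hy⟩, hy, rfl⟩
    have h2 := Finset.card_image_of_injective
      (Finset.univ.filter (fun x : Fin n => (x : ℕ) ∈ S)) Fin.val_injective
    rw [himg] at h2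
    omega
  have hprod : ∏ x : Fin n, (A x).card = (k - 1) ^ (s - 1) * k ^ (n - s) := by
    rw [← Finset.prod_filter_mul_prod_filter_not Finset.univ (fun x : Fin n => (x : ℕ) ∈ S)]
    have h2 : ∏ x ∈ Finset.univ.filter (fun x : Fin n => ¬ (x : ℕ) ∈ S), (A x).card
        = k ^ (n - s) := by
      rw [Finset.prod_congr rfl (fun x hx => ?_), Finset.prod_const]
      · congr 1
        have htot := Finset.card_filter_add_card_filter_not
          (s := (Finset.univ : Finset (Fin n))) (p := fun x : Fin n => (x : ℕ) ∈ S)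
        rw [card_univ, Fintype.card_fin, hTcard] at htot
        omega
      · rw [mem_filter] at hx
        have hxa : (x : ℕ) ≠ a := fun h => hx.2 (h ▸ ha)
        rw [hA]
        simp only [hxa, if_false, hx.2, if_false, card_univ, Fintype.card_fin]
    have h1 : ∏ x ∈ Finset.univ.filter (fun x : Fin n => (x : ℕ) ∈ S), (A x).card
        = (k - 1) ^ (s - 1) := by
      rw [← Finset.prod_filter_mul_prod_filter_not
        (Finset.univ.filter (fun x : Fin n => (x : ℕ) ∈ S)) (fun x : Fin n => (x : ℕ) = a)]
      have ha1 : ((Finset.univ.filter (fun x : Fin n => (x : ℕ) ∈ S)).filter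
          (fun x : Fin n => (x : ℕ) = a)) = {(⟨a, han⟩ : Fin n)} := by
        ext x
        simp only [mem_filter, mem_univ, true_and, mem_singleton, Fin.ext_iff]
        constructor
        · rintro ⟨_, h⟩; exact h
        · rintro h; exact ⟨h ▸ ha, h⟩
      have e1 : ∏ x ∈ ((Finset.univ.filter (fun x : Fin n => (x : ℕ) ∈ S)).filter
          (fun x : Fin n => (x : ℕ) = a)), (A x).card = 1 := by
        rw [ha1, Finset.prod_singleton, hA]
        simp [hc0]
      have e2 : ∏ x ∈ ((Finset.univ.filter (fun x : Fin n => (x : ℕ) ∈ S)).filter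
          (fun x : Fin n => ¬ (x : ℕ) = a)), (A x).card = (k - 1) ^ (s - 1) := by
        rw [Finset.prod_congr rfl (fun x hx => ?_), Finset.prod_const]
        · congr 1
          have htot := Finset.card_filter_add_card_filter_not
            (s := Finset.univ.filter (fun x : Fin n => (x : ℕ) ∈ S))
            (p := fun x : Fin n => (x : ℕ) = a)
          rw [hTcard, ha1, card_singleton] at htot
          omega
        · rw [mem_filter, mem_filter] at hx
          rw [hA]
          simp only [hx.2, if_false, hx.1.2, if_true, hc1]
      rw [e1, e2, one_mul]
    rw [h1, h2]
  rw [hcard, hprod]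
  have e1 : n - s = (k - s) + (n - k) := by omega
  have e2 : k - 1 = (s - 1) + (k - s) := by omega
  calc (k - 1) ^ (k - 1) * k ^ (n - k)
      = (k - 1) ^ (s - 1) * ((k - 1) ^ (k - s) * k ^ (n - k)) := by rw [e2, pow_add]; ring
    _ ≤ (k - 1) ^ (s - 1) * (k ^ (k - s) * k ^ (n - k)) := by
        apply Nat.mul_le_mul_left
        exact Nat.mul_le_mul_right _ (Nat.pow_le_pow_left (by omega) _)
    _ = (k - 1) ^ (s - 1) * k ^ (n - s) := by rw [e1, pow_add]

lemma card_bad1 {n k : ℕ} (hk : 2 ≤ k) {S : Finset ℕ} (hS : S ⊆ Finset.range n)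
    {a : ℕ} (ha : a ∈ S) (hsk : S.card ≤ k) (hkn : k ≤ n) :
    (bad1 n k S a).card ≤ k ^ n - (k - 1) ^ (k - 1) * k ^ (n - k) := by
  classical
  have htot := Finset.card_filter_add_card_filter_not
    (s := (Finset.univ : Finset (Fin n → Fin k)))
    (p := fun h : Fin n → Fin k => selSet n k h ∩ S = {a})
  rw [card_univ] at htot
  have hcard : Fintype.card (Fin n → Fin k) = k ^ n := by
    simp [Fintype.card_fun]
  rw [hcard] at htot
  have hgood := card_good1 hk hS ha hsk hkn
  have : (bad1 n k S a).card = (Finset.univ.filter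
      (fun h : Fin n → Fin k => ¬ selSet n k h ∩ S = {a})).card := rfl
  rw [good1] at hgood
  omega

/-- Families of `m` colorings all of which fail to select `a` from `S`. -/
def badM (n k m : ℕ) (S : Finset ℕ) (a : ℕ) : Finset (Fin m → Fin n → Fin k) :=
  Fintype.piFinset (fun _ => bad1 n k S a)

lemma card_badM {n k : ℕ} (m : ℕ) (hk : 2 ≤ k) {S : Finset ℕ} (hS : S ⊆ Finset.range n)
    {a : ℕ} (ha : a ∈ S) (hsk : S.card ≤ k) (hkn : k ≤ n) :
    (badM n k m S a).card ≤ (k ^ n - (k - 1) ^ (k - 1) * k ^ (n - k)) ^ m := by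
  rw [badM, Fintype.card_piFinset, Finset.prod_const, card_univ, Fintype.card_fin]
  exact Nat.pow_le_pow_left (card_bad1 hk hS ha hsk hkn) m

/-- small subsets of `range n` -/
def Q (n k : ℕ) : Finset (Finset ℕ) :=
  (Finset.range n).powerset.filter fun S => S.card ≤ k

lemma card_Q (n k : ℕ) (hn : 1 ≤ n) : (Q n k).card ≤ (k + 1) * n ^ k := by
  classical
  have hsub : Q n k ⊆ (Finset.range (k + 1)).biUnion
      (fun j => (Finset.range n).powersetCard j) := by
    intro S hS
    rw [Q, mem_filter, mem_powerset] at hS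
    rw [mem_biUnion]
    exact ⟨S.card, by simp [Nat.lt_succ_iff, hS.2], by
      rw [Finset.mem_powersetCard]; exact ⟨hS.1, rfl⟩⟩
  calc (Q n k).card ≤ _ := Finset.card_le_card hsub
    _ ≤ ∑ j ∈ Finset.range (k + 1), ((Finset.range n).powersetCard j).card :=
        Finset.card_biUnion_le
    _ ≤ ∑ _j ∈ Finset.range (k + 1), n ^ k := by
        apply Finset.sum_le_sum
        intro j hj
        rw [Finset.card_powersetCard, Finset.card_range]
        calc n.choose j ≤ n ^ j := Nat.choose_le_pow n j
          _ ≤ n ^ k := Nat.pow_le_pow_right hn (by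
            simpa [Nat.lt_succ_iff] using (Finset.mem_range.1 hj))
    _ = (k + 1) * n ^ k := by rw [Finset.sum_const, Finset.card_range, smul_eq_mul]

/-- The set of bad families of colorings. -/
def badAll (n k m : ℕ) : Finset (Fin m → Fin n → Fin k) :=
  (Q n k).biUnion fun S => S.biUnion fun a => badM n k m S a

lemma card_badAll (n k m : ℕ) (hk : 2 ≤ k) (hkn : k ≤ n) (hn : 1 ≤ n) :
    (badAll n k m).card ≤
      (k + 1) * n ^ k * (k * (k ^ n - (k - 1) ^ (k - 1) * k ^ (n - k)) ^ m) := by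
  classical
  calc (badAll n k m).card
      ≤ ∑ S ∈ Q n k, (S.biUnion fun a => badM n k m S a).card := Finset.card_biUnion_le
    _ ≤ ∑ S ∈ Q n k, (k * (k ^ n - (k - 1) ^ (k - 1) * k ^ (n - k)) ^ m) := by
        apply Finset.sum_le_sum
        intro S hS
        rw [Q, mem_filter, mem_powerset] at hS
        calc (S.biUnion fun a => badM n k m S a).card
            ≤ ∑ a ∈ S, (badM n k m S a).card := Finset.card_biUnion_le
          _ ≤ ∑ _a ∈ S, (k ^ n - (k - 1) ^ (k - 1) * k ^ (n - k)) ^ m := by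
              apply Finset.sum_le_sum
              intro a ha
              exact card_badM m hk hS.1 ha hS.2 hkn
          _ = S.card * (k ^ n - (k - 1) ^ (k - 1) * k ^ (n - k)) ^ m := by
              rw [Finset.sum_const, smul_eq_mul]
          _ ≤ k * (k ^ n - (k - 1) ^ (k - 1) * k ^ (n - k)) ^ m :=
              Nat.mul_le_mul_right _ hS.2
    _ = (Q n k).card * (k * (k ^ n - (k - 1) ^ (k - 1) * k ^ (n - k)) ^ m) := by
        rw [Finset.sum_const, smul_eq_mul]
    _ ≤ (k + 1) * n ^ k * (k * (k ^ n - (k - 1) ^ (k - 1) * k ^ (n - k)) ^ m) :=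
        Nat.mul_le_mul_right _ (card_Q n k hn)

set_option maxHeartbeats 1600000 in
lemma key_lt (n k : ℕ) (hn : 16 ≤ n) (hk : 2 ≤ k) (hkn : k ≤ n) :
    (k + 1) * n ^ k *
        (k * (k ^ n - (k - 1) ^ (k - 1) * k ^ (n - k)) ^ (9 * k ^ 2 * Nat.log 2 n))
      < (k ^ n) ^ (9 * k ^ 2 * Nat.log 2 n) := by
  set L := Nat.log 2 n with hL
  set m := 9 * k ^ 2 * L with hm
  have h1k : (1:ℕ) ≤ k := by omega
  have hGle : (k - 1) ^ (k - 1) * k ^ (n - k) ≤ k ^ n := by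
    calc (k - 1) ^ (k - 1) * k ^ (n - k) ≤ k ^ (k - 1) * k ^ (n - k) :=
          Nat.mul_le_mul_right _ (Nat.pow_le_pow_left (by omega) _)
      _ = k ^ (k - 1 + (n - k)) := (pow_add _ _ _).symm
      _ ≤ k ^ n := Nat.pow_le_pow_right (by omega) (by omega)
  rw [← Nat.cast_lt (α := ℝ)]
  push_cast [Nat.cast_sub hGle, Nat.cast_sub h1k]
  -- real quantities
  set K : ℝ := (k:ℝ) ^ n with hKdef
  set Gr : ℝ := ((k:ℝ) - 1) ^ (k - 1) * (k:ℝ) ^ (n - k) with hGrdef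
  have hkR2 : (2:ℝ) ≤ (k:ℝ) := by exact_mod_cast hk
  have hk0 : (0:ℝ) < k := by linarith
  have hk1 : (0:ℝ) < (k:ℝ) - 1 := by linarith
  have hK0 : (0:ℝ) < K := by positivity
  have hGr0 : (0:ℝ) < Gr := by positivity
  have hGrK : Gr ≤ K := by
    rw [hGrdef, hKdef]
    have := hGle
    rw [← Nat.cast_le (α := ℝ)] at this
    push_cast [Nat.cast_sub h1k] at this
    exact this
  set q : ℝ := Gr / K with hqdef
  have hq0 : (0:ℝ) < q := div_pos hGr0 hK0
  have hq1 : q ≤ 1 := (div_le_one hK0).2 hGrK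
  have hKG : K - Gr = K * (1 - q) := by
    rw [hqdef, mul_sub, mul_one, mul_div_cancel₀ _ hK0.ne']
  have hnR : (16:ℝ) ≤ (n:ℝ) := by exact_mod_cast hn
  have hn0 : (0:ℝ) < (n:ℝ) := by linarith
  have hknR : (k:ℝ) ≤ (n:ℝ) := by exact_mod_cast hkn
  -- q ≥ 1/(3k)
  have hq3k : 1 / (3 * (k:ℝ)) ≤ q := by
    have hkk : K = (k:ℝ) ^ k * (k:ℝ) ^ (n - k) := by
      rw [hKdef, ← pow_add]
      congr 1
      omega
    have hqeq : q = ((k:ℝ) - 1) ^ (k - 1) / (k:ℝ) ^ k := by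
      rw [hqdef, hGrdef, hkk, mul_div_mul_right _ _ (by positivity : ((k:ℝ) ^ (n-k)) ≠ 0)]
    have hkey : (k:ℝ) ^ (k - 1) ≤ 3 * ((k:ℝ) - 1) ^ (k - 1) := by
      set x : ℝ := 1 / ((k:ℝ) - 1) with hx
      have hx0 : (0:ℝ) < x := by positivity
      have h1 : (1 + x) ≤ Real.exp x := by
        have := Real.add_one_le_exp x
        linarith
      have h2 : (1 + x) ^ (k - 1) ≤ Real.exp x ^ (k - 1) :=
        pow_le_pow_left₀ (by linarith) h1 _
      have h3 : Real.exp x ^ (k - 1) = Real.exp (((k - 1 : ℕ) : ℝ) * x) := by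
        rw [Real.exp_nat_mul]
      have hx1 : ((k - 1 : ℕ) : ℝ) * x = 1 := by
        rw [Nat.cast_sub h1k, hx]
        push_cast
        field_simp
      have h4 : Real.exp 1 < 3 := by
        have := Real.exp_one_lt_d9
        norm_num at this ⊢
        linarith
      have h5 : (1 + x) ^ (k - 1) ≤ 3 := by
        rw [h3, hx1] at h2
        linarith
      have hkeq : (k:ℝ) = ((k:ℝ) - 1) * (1 + x) := by
        rw [hx]
        field_simp
        ring
      have h6 : (k:ℝ) ^ (k - 1) = ((k:ℝ) - 1) ^ (k - 1) * (1 + x) ^ (k - 1) := by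
        rw [← mul_pow, ← hkeq]
      calc (k:ℝ) ^ (k - 1) = ((k:ℝ) - 1) ^ (k - 1) * (1 + x) ^ (k - 1) := h6
        _ ≤ ((k:ℝ) - 1) ^ (k - 1) * 3 := by
            apply mul_le_mul_of_nonneg_left h5 (by positivity)
        _ = 3 * ((k:ℝ) - 1) ^ (k - 1) := by ring
    rw [hqeq, div_le_div_iff₀ (by positivity) (by positivity)]
    have hpk : (k:ℝ) ^ k = (k:ℝ) ^ (k - 1) * (k:ℝ) := by
      rw [← pow_succ]
      congr 1
      omega
    rw [one_mul, hpk]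
    calc (k:ℝ) ^ (k - 1) * (k:ℝ) ≤ (3 * ((k:ℝ) - 1) ^ (k - 1)) * (k:ℝ) := by
          apply mul_le_mul_of_nonneg_right hkey (by positivity)
      _ = ((k:ℝ) - 1) ^ (k - 1) * (3 * (k:ℝ)) := by ring
  -- (1-q)^m ≤ exp(-(q m))
  have hexp1 : (1 - q) ^ m ≤ Real.exp (-(q * (m:ℝ))) := by
    have h1 : 1 - q ≤ Real.exp (-q) := by
      have := Real.add_one_le_exp (-q)
      linarith
    calc (1 - q) ^ m ≤ Real.exp (-q) ^ m := pow_le_pow_left₀ (by linarith) h1 m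
      _ = Real.exp ((m:ℝ) * (-q)) := (Real.exp_nat_mul _ _).symm
      _ = Real.exp (-(q * (m:ℝ))) := by ring_nf
  -- prefactor bound
  have hc : ((k:ℝ) + 1) * (n:ℝ) ^ k * (k:ℝ) ≤ (n:ℝ) ^ (k + 3) := by
    have he : (n:ℝ) ^ (k + 3) = (n:ℝ) ^ 2 * (n:ℝ) ^ k * (n:ℝ) := by
      rw [pow_add]
      ring
    rw [he]
    have h1 : (k:ℝ) + 1 ≤ (n:ℝ) ^ 2 := by nlinarith
    have h2 : (0:ℝ) ≤ (n:ℝ) ^ k := by positivity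
    calc ((k:ℝ) + 1) * (n:ℝ) ^ k * (k:ℝ) = (((k:ℝ) + 1) * (k:ℝ)) * (n:ℝ) ^ k := by ring
      _ ≤ ((n:ℝ) ^ 2 * (n:ℝ)) * (n:ℝ) ^ k := by
          apply mul_le_mul_of_nonneg_right _ h2
          nlinarith
      _ = (n:ℝ) ^ 2 * (n:ℝ) ^ k * (n:ℝ) := by ring
  -- log bound
  have hL4 : 4 ≤ L := by
    rw [hL]
    exact (Nat.le_log_iff_pow_le (by norm_num) (by omega)).2 (by norm_num; omega)
  have hL4R : (4:ℝ) ≤ (L:ℝ) := by exact_mod_cast hL4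
  have hlogn : Real.log n ≤ (L:ℝ) := by
    have h2 : (n:ℝ) < 2 ^ (L + 1) := by
      exact_mod_cast Nat.lt_pow_succ_log_self (by norm_num) n
    have hlt : Real.log n < Real.log (2 ^ (L + 1)) := Real.log_lt_log hn0 h2
    rw [Real.log_pow] at hlt
    push_cast at hlt
    have hlog2 : Real.log 2 < 0.7 := by
      have := Real.log_two_lt_d9
      norm_num at this ⊢
      linarith
    have hLpos : (0:ℝ) < (L:ℝ) + 1 := by linarith
    have hmul := mul_lt_mul_of_pos_left hlog2 hLpos
    linarith
  -- main estimate
  have hqm : 3 * (k:ℝ) * (L:ℝ) ≤ q * (m:ℝ) := by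
    have hm0 : (0:ℝ) ≤ (m:ℝ) := by positivity
    have := mul_le_mul_of_nonneg_right hq3k hm0
    have hmeq : 1 / (3 * (k:ℝ)) * (m:ℝ) = 3 * (k:ℝ) * (L:ℝ) := by
      rw [hm]
      push_cast
      field_simp
      ring
    linarith [hmeq ▸ this]
  have hfinal : ((k:ℝ) + 1) * (n:ℝ) ^ k * (k:ℝ) * (1 - q) ^ m < 1 := by
    have hA : ((k:ℝ) + 1) * (n:ℝ) ^ k * (k:ℝ) * (1 - q) ^ m
        ≤ (n:ℝ) ^ (k + 3) * Real.exp (-(q * (m:ℝ))) := by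
      apply mul_le_mul hc hexp1 (pow_nonneg (by linarith) m) (by positivity)
    have hB : Real.exp (-(q * (m:ℝ))) ≤ Real.exp (-(3 * (k:ℝ) * (L:ℝ))) := by
      apply Real.exp_le_exp.2
      linarith
    have hC : (n:ℝ) ^ (k + 3) = Real.exp (((k + 3 : ℕ) : ℝ) * Real.log n) := by
      rw [Real.exp_nat_mul, Real.exp_log hn0]
    have hD : Real.exp (((k + 3 : ℕ) : ℝ) * Real.log n) * Real.exp (-(3 * (k:ℝ) * (L:ℝ)))
        = Real.exp (((k + 3 : ℕ) : ℝ) * Real.log n - 3 * (k:ℝ) * (L:ℝ)) := by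
      rw [← Real.exp_add]
      ring_nf
    have hE : ((k + 3 : ℕ) : ℝ) * Real.log n - 3 * (k:ℝ) * (L:ℝ) < 0 := by
      push_cast
      have hlog0 : 0 ≤ Real.log n := Real.log_nonneg (by linarith)
      nlinarith
    calc ((k:ℝ) + 1) * (n:ℝ) ^ k * (k:ℝ) * (1 - q) ^ m
        ≤ (n:ℝ) ^ (k + 3) * Real.exp (-(q * (m:ℝ))) := hA
      _ ≤ (n:ℝ) ^ (k + 3) * Real.exp (-(3 * (k:ℝ) * (L:ℝ))) := by
          apply mul_le_mul_of_nonneg_left hB (by positivity)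
      _ = Real.exp (((k + 3 : ℕ) : ℝ) * Real.log n - 3 * (k:ℝ) * (L:ℝ)) := by
          rw [hC, hD]
      _ < 1 := Real.exp_lt_one_iff.2 hE
  calc ((k:ℝ) + 1) * (n:ℝ) ^ k * ((k:ℝ) * (K - Gr) ^ m)
      = (((k:ℝ) + 1) * (n:ℝ) ^ k * (k:ℝ) * (1 - q) ^ m) * K ^ m := by
        rw [hKG, mul_pow]
        ring
    _ < 1 * K ^ m := by
        apply mul_lt_mul_of_pos_right hfinal (pow_pos hK0 m)
    _ = K ^ m := one_mul _

end StrongSelectorAux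

/-- There is an absolute constant `C` such that for all sufficiently large `n` and
all `2 ≤ k ≤ n` there exists an `(n,k)`-strong selector of size at most
`C * k^2 * log n`. -/
theorem exists_strong_selector :
    ∃ C : ℕ, 0 < C ∧ ∃ N : ℕ, ∀ n ≥ N, ∀ k, 2 ≤ k → k ≤ n →
      ∃ F : Finset (Finset ℕ),
        (∀ f ∈ F, f ⊆ Finset.range n) ∧
        F.card ≤ C * k ^ 2 * Nat.log 2 n ∧
        ∀ S : Finset ℕ, S ⊆ Finset.range n → S.card ≤ k →
          ∀ a ∈ S, ∃ f ∈ F, f ∩ S = {a} := by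
  classical
  refine ⟨9, by norm_num, 16, ?_⟩
  intro n hn k hk2 hkn
  set m := 9 * k ^ 2 * Nat.log 2 n with hm
  have hn1 : 1 ≤ n := by omega
  have hcardΩ : Fintype.card (Fin m → Fin n → Fin k) = (k ^ n) ^ m := by
    simp [Fintype.card_fun]
  have hlt : (StrongSelectorAux.badAll n k m).card
      < Fintype.card (Fin m → Fin n → Fin k) := by
    rw [hcardΩ]
    calc (StrongSelectorAux.badAll n k m).card
        ≤ (k + 1) * n ^ k * (k * (k ^ n - (k - 1) ^ (k - 1) * k ^ (n - k)) ^ m) :=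
          StrongSelectorAux.card_badAll n k m hk2 hkn hn1
      _ < (k ^ n) ^ m := by rw [hm]; exact StrongSelectorAux.key_lt n k hn hk2 hkn
  have hg : ∃ g : Fin m → Fin n → Fin k, g ∉ StrongSelectorAux.badAll n k m := by
    by_contra h
    push_neg at h
    have hsub : (Finset.univ : Finset (Fin m → Fin n → Fin k))
        ⊆ StrongSelectorAux.badAll n k m := fun g _ => h g
    have := Finset.card_le_card hsub
    rw [Finset.card_univ] at this
    omega
  obtain ⟨g, hg⟩ := hg
  refine ⟨Finset.univ.image (fun i : Fin m => StrongSelectorAux.selSet n k (g i)), ?_, ?_, ?_⟩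
  · intro f hf
    rw [Finset.mem_image] at hf
    obtain ⟨i, _, rfl⟩ := hf
    exact StrongSelectorAux.selSet_subset n k (g i)
  · calc (Finset.univ.image (fun i : Fin m => StrongSelectorAux.selSet n k (g i))).card
        ≤ (Finset.univ : Finset (Fin m)).card := Finset.card_image_le
      _ = m := by rw [Finset.card_univ, Fintype.card_fin]
      _ = 9 * k ^ 2 * Nat.log 2 n := hm
  · intro S hS hSk a ha
    have hSQ : S ∈ StrongSelectorAux.Q n k := by
      rw [StrongSelectorAux.Q, Finset.mem_filter, Finset.mem_powerset]
      exact ⟨hS, hSk⟩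
    have h1 : g ∉ (S.biUnion fun a => StrongSelectorAux.badM n k m S a) := by
      intro hmem
      exact hg (Finset.mem_biUnion.2 ⟨S, hSQ, hmem⟩)
    have h2 : g ∉ StrongSelectorAux.badM n k m S a := by
      intro hmem
      exact h1 (Finset.mem_biUnion.2 ⟨a, ha, hmem⟩)
    rw [StrongSelectorAux.badM, Fintype.mem_piFinset] at h2
    push_neg at h2
    obtain ⟨i, hi⟩ := h2
    have hsel : StrongSelectorAux.selSet n k (g i) ∩ S = {a} := by
      by_contra hne
      exact hi (Finset.mem_filter.2 ⟨Finset.mem_univ _, hne⟩)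
    exact ⟨_, Finset.mem_image_of_mem _ (Finset.mem_univ i), hsel⟩
end
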